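/- Let H be a map on the space of continuous signals u : [0,∞) → ℝⁿ whose outputs are continuous, let M be a real symmetric m×m matrix, let (A, B, C, D) with A ∈ ℝ^{k×k}, B ∈ ℝ^{k×2n}, C ∈ ℝ^{m×k}, D ∈ ℝ^{m×2n} be a state-space realization of the multiplier N, and let Π be a real symmetric 2×2 matrix with entries π₁₁, π₁₂, π₂₂. Suppose that for every pair of inputs u₁, u₂, writing Δv = (Δu, Δy) with Δu = u₁ − u₂ and Δy = Hu₁ − Hu₂, there is a continuously differentiable x : [0,∞) → ℝ^k with x'(t) = A x(t) + B Δv(t), x(0) = 0, and that with g(t) := C x(t) + D Δv(t) the hard IQC holds: ∫₀ᵀ g(t)ᵀ M g(t) dt ≥ 0 for all T > 0. If there exist a real symmetric positive semidefinite k×k matrix P and τ > 0 such that the block matrix [[AᵀP + PA, PB], [BᵀP, −(Π ⊗ Iₙ)]] + τ·[C D]ᵀ M [C D] is negative semidefinite, then for every pair of inputs and every T > 0: π₁₁·∫₀ᵀ |Δu(t)|² dt + 2·π₁₂·∫₀ᵀ Δu(t)ᵀΔy(t) dt + π₂₂·∫₀ᵀ |Δy(t)|² dt ≥ 0; consequently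 SRG_e(H) ⊆ S(Π). -/

import Mathlib

open scoped RealInnerProductSpace Classical
open MeasureTheory Matrix

/-- The measure on `[0,∞)`. -/
noncomputable def posMeasure : Measure ℝ := volume.restrict (Set.Ici (0 : ℝ))

/-- Truncation of a signal: `u_T` equals `u` on `[0,T]` and `0` on `(T,∞)`. -/
noncomputable def trunc {E : Type*} [Zero E] (u : ℝ → E) (T : ℝ) : ℝ → E :=
  fun t => if t ≤ T then u t else 0

/-- The region `S(Π)` in the complex plane associated with a real symmetric 2×2 matrix `Π`
with entries `π₁₁, π₁₂, π₂₂`:  `S(Π) = {z ∈ ℂ : π₁₁ + 2·π₁₂·Re z + π₂₂·|z|² ≥ 0}`. -/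
def SRegion (p11 p12 p22 : ℝ) : Set ℂ :=
  {z : ℂ | 0 ≤ p11 + 2 * p12 * z.re + p22 * ‖z‖ ^ 2}

/-- SRG point `z₊(u, y) = (‖y‖/‖u‖)·exp(+i·arccos(⟪u,y⟫/(‖u‖‖y‖)))` (and `0` for `y = 0`). -/
noncomputable def srgPlus {E : Type*} [NormedAddCommGroup E] [InnerProductSpace ℝ E]
    (u y : E) : ℂ :=
  if y = 0 then 0 else
    ((‖y‖ / ‖u‖ : ℝ) : ℂ) *
      Complex.exp (Complex.I * (Real.arccos (⟪u, y⟫ / (‖u‖ * ‖y‖)) : ℝ))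

/-- SRG point `z₋(u, y) = (‖y‖/‖u‖)·exp(−i·arccos(⟪u,y⟫/(‖u‖‖y‖)))` (and `0` for `y = 0`). -/
noncomputable def srgMinus {E : Type*} [NormedAddCommGroup E] [InnerProductSpace ℝ E]
    (u y : E) : ℂ :=
  if y = 0 then 0 else
    ((‖y‖ / ‖u‖ : ℝ) : ℂ) *
      Complex.exp (-Complex.I * (Real.arccos (⟪u, y⟫ / (‖u‖ * ‖y‖)) : ℝ))

/-- The stacked signal `Δv = (Δu, Δy) : [0,∞) → ℝ^{2n}`. -/
noncomputable def dvPair {n : ℕ} (du dy : ℝ → EuclideanSpace ℝ (Fin n)) :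
    ℝ → (Fin n ⊕ Fin n) → ℝ :=
  fun t => Sum.elim ((WithLp.equiv 2 _) (du t)) ((WithLp.equiv 2 _) (dy t))

/-- `Π ⊗ Iₙ` : the real `2n×2n` block matrix
`[[π₁₁·Iₙ, π₁₂·Iₙ], [π₁₂·Iₙ, π₂₂·Iₙ]]`. -/
def piKronR (n : ℕ) (p11 p12 p22 : ℝ) :
    Matrix (Fin n ⊕ Fin n) (Fin n ⊕ Fin n) ℝ :=
  Matrix.fromBlocks (p11 • 1) (p12 • 1) (p12 • 1) (p22 • 1)

/-- The hard scaled relative graph of a map `H` on continuous signals: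
`SRG_e(H) = ⋃ {z_±((Δu)_T, (Δy)_T)}` over all continuous inputs `u₁, u₂` and all `T > 0`
with `(Δu)_T ≠ 0` (as an element of `L²`). -/
noncomputable def hardSRGc {n : ℕ}
    (H : (ℝ → EuclideanSpace ℝ (Fin n)) → (ℝ → EuclideanSpace ℝ (Fin n))) : Set ℂ :=
  {z : ℂ | ∃ u₁ u₂ : ℝ → EuclideanSpace ℝ (Fin n),
    ContinuousOn u₁ (Set.Ici 0) ∧ ContinuousOn u₂ (Set.Ici 0) ∧
    ∃ T : ℝ, 0 < T ∧
      ∃ (h₁ : MemLp (trunc (fun t => u₁ t - u₂ t) T) 2 posMeasure)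
        (h₂ : MemLp (trunc (fun t => H u₁ t - H u₂ t) T) 2 posMeasure),
        h₁.toLp _ ≠ 0 ∧ (z = srgPlus (h₁.toLp _) (h₂.toLp _) ∨
          z = srgMinus (h₁.toLp _) (h₂.toLp _))}

lemma quad_deriv {k : ℕ} (P : Matrix (Fin k) (Fin k) ℝ) (hP : Pᵀ = P)
    (x : ℝ → Fin k → ℝ) (x' : Fin k → ℝ) (t : ℝ) (hx : HasDerivAt x x' t) :
    HasDerivAt (fun s => x s ⬝ᵥ (P *ᵥ x s)) (2 * (x t ⬝ᵥ (P *ᵥ x'))) t := by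
  have hco : ∀ i, HasDerivAt (fun s => x s i) (x' i) t := fun i => hasDerivAt_pi.1 hx i
  have h1 : HasDerivAt (fun s => ∑ i, ∑ j, x s i * (P i j * x s j))
      (∑ i, ∑ j, (x' i * (P i j * x t j) + x t i * (P i j * x' j))) t := by
    apply HasDerivAt.fun_sum
    intro i _
    apply HasDerivAt.fun_sum
    intro j _
    have := (hco i).fun_mul ((hco j).const_mul (P i j))
    simpa [mul_comm, mul_left_comm, mul_assoc] using this
  have heq : (fun s => x s ⬝ᵥ (P *ᵥ x s)) = fun s => ∑ i, ∑ j, x s i * (P i j * x s j) := by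
    funext s
    simp [dotProduct, mulVec, Finset.mul_sum]
  rw [heq]
  convert h1 using 1
  have hsym : ∀ i j, P i j = P j i := fun i j => by
    have h := congrFun (congrFun hP j) i
    simpa using h
  rw [Finset.sum_congr rfl (fun i _ => Finset.sum_add_distrib)]
  rw [Finset.sum_add_distrib]
  have : ∑ i, ∑ j, x' i * (P i j * x t j) = ∑ i, ∑ j, x t i * (P i j * x' j) := by
    rw [Finset.sum_comm]
    apply Finset.sum_congr rfl; intro i _
    apply Finset.sum_congr rfl; intro j _
    rw [hsym j i]; ring
  rw [this]
  simp [dotProduct, mulVec, Finset.mul_sum, two_mul, Finset.sum_add_distrib]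
lemma dv_quad {n : ℕ} (p11 p12 p22 : ℝ) (du dy : ℝ → EuclideanSpace ℝ (Fin n)) (t : ℝ) :
    dvPair du dy t ⬝ᵥ (piKronR n p11 p12 p22 *ᵥ dvPair du dy t) =
      p11 * ‖du t‖ ^ 2 + 2 * p12 * ⟪du t, dy t⟫ + p22 * ‖dy t‖ ^ 2 := by
  have hnu : ‖du t‖ ^ 2 = ⟪du t, du t⟫ := (real_inner_self_eq_norm_sq _).symm
  have hny : ‖dy t‖ ^ 2 = ⟪dy t, dy t⟫ := (real_inner_self_eq_norm_sq _).symm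
  rw [hnu, hny]
  set a : Fin n → ℝ := (WithLp.equiv 2 _) (du t)
  set b : Fin n → ℝ := (WithLp.equiv 2 _) (dy t)
  have hiu : ⟪du t, du t⟫ = a ⬝ᵥ a := by
    rw [EuclideanSpace.inner_eq_star_dotProduct, star_trivial, dotProduct_comm]; rfl
  have hiy : ⟪dy t, dy t⟫ = b ⬝ᵥ b := by
    rw [EuclideanSpace.inner_eq_star_dotProduct, star_trivial, dotProduct_comm]; rfl
  have hiuy : ⟪du t, dy t⟫ = a ⬝ᵥ b := by
    rw [EuclideanSpace.inner_eq_star_dotProduct, star_trivial, dotProduct_comm]; rfl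
  rw [hiu, hiy, hiuy]
  show (Sum.elim a b) ⬝ᵥ (piKronR n p11 p12 p22 *ᵥ Sum.elim a b) = _
  rw [piKronR, Matrix.fromBlocks_mulVec]
  simp only [Sum.elim_comp_inl, Sum.elim_comp_inr, Matrix.smul_mulVec, Matrix.one_mulVec]
  rw [sumElim_dotProduct_sumElim]
  simp only [dotProduct_add, dotProduct_smul, smul_eq_mul]
  have : b ⬝ᵥ a = a ⬝ᵥ b := dotProduct_comm b a
  rw [this]; ring
lemma lmi_pt {n m k : ℕ}
    (A : Matrix (Fin k) (Fin k) ℝ) (B : Matrix (Fin k) (Fin n ⊕ Fin n) ℝ)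
    (C : Matrix (Fin m) (Fin k) ℝ) (D : Matrix (Fin m) (Fin n ⊕ Fin n) ℝ)
    (M : Matrix (Fin m) (Fin m) ℝ)
    (p11 p12 p22 : ℝ) (P : Matrix (Fin k) (Fin k) ℝ) (hP : Pᵀ = P) (τ : ℝ)
    (hLMI : (-(Matrix.fromBlocks (Aᵀ * P + P * A) (P * B) (Bᵀ * P)
          (-(piKronR n p11 p12 p22)) +
        τ • ((Matrix.fromCols C D)ᵀ * M * Matrix.fromCols C D))).PosSemidef)
    (xv : Fin k → ℝ) (w : (Fin n ⊕ Fin n) → ℝ) :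
    2 * (xv ⬝ᵥ (P *ᵥ (A *ᵥ xv + B *ᵥ w))) +
      τ * ((C *ᵥ xv + D *ᵥ w) ⬝ᵥ (M *ᵥ (C *ᵥ xv + D *ᵥ w))) ≤
      w ⬝ᵥ (piKronR n p11 p12 p22 *ᵥ w) := by
  set Q := Matrix.fromBlocks (Aᵀ * P + P * A) (P * B) (Bᵀ * P) (-(piKronR n p11 p12 p22)) with hQdef
  set N := Matrix.fromCols C D with hNdef
  set v : (Fin k ⊕ (Fin n ⊕ Fin n)) → ℝ := Sum.elim xv w with hv
  have hkey := hLMI.dotProduct_mulVec_nonneg v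
  have hstar : star v = v := by funext i; simp
  rw [hstar] at hkey
  have hle : v ⬝ᵥ ((Q + τ • (Nᵀ * M * N)) *ᵥ v) ≤ 0 := by
    have : v ⬝ᵥ ((-(Q + τ • (Nᵀ * M * N))) *ᵥ v) =
        -(v ⬝ᵥ ((Q + τ • (Nᵀ * M * N)) *ᵥ v)) := by
      rw [Matrix.neg_mulVec, dotProduct_neg]
    rw [this] at hkey
    linarith
  have hsymdot : ∀ a b : Fin k → ℝ, a ⬝ᵥ (P *ᵥ b) = b ⬝ᵥ (P *ᵥ a) := by
    intro a b
    rw [Matrix.dotProduct_mulVec]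
    conv_lhs => rw [← hP]
    rw [Matrix.vecMul_transpose, dotProduct_comm]
  -- expand quadratic forms
  have hQ : v ⬝ᵥ (Q *ᵥ v) =
      2 * (xv ⬝ᵥ (P *ᵥ (A *ᵥ xv + B *ᵥ w))) - w ⬝ᵥ (piKronR n p11 p12 p22 *ᵥ w) := by
    rw [hv, hQdef, Matrix.fromBlocks_mulVec]
    simp only [Sum.elim_comp_inl, Sum.elim_comp_inr]
    rw [sumElim_dotProduct_sumElim]
    rw [Matrix.add_mulVec, dotProduct_add, dotProduct_add, dotProduct_add]
    have t1 : xv ⬝ᵥ ((Aᵀ * P) *ᵥ xv) = xv ⬝ᵥ (P *ᵥ (A *ᵥ xv)) := by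
      rw [← Matrix.mulVec_mulVec, Matrix.dotProduct_mulVec, Matrix.vecMul_transpose, hsymdot]
    have t1' : xv ⬝ᵥ ((P * A) *ᵥ xv) = xv ⬝ᵥ (P *ᵥ (A *ᵥ xv)) := by
      rw [← Matrix.mulVec_mulVec]
    have t2 : xv ⬝ᵥ ((P * B) *ᵥ w) = xv ⬝ᵥ (P *ᵥ (B *ᵥ w)) := by
      rw [← Matrix.mulVec_mulVec]
    have t3 : w ⬝ᵥ ((Bᵀ * P) *ᵥ xv) = xv ⬝ᵥ (P *ᵥ (B *ᵥ w)) := by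
      rw [← Matrix.mulVec_mulVec, Matrix.dotProduct_mulVec, Matrix.vecMul_transpose]
      exact hsymdot _ _
    have t4 : w ⬝ᵥ ((-(piKronR n p11 p12 p22)) *ᵥ w) =
        -(w ⬝ᵥ (piKronR n p11 p12 p22 *ᵥ w)) := by
      rw [Matrix.neg_mulVec, dotProduct_neg]
    rw [t1, t1', t2, t3, t4, Matrix.mulVec_add, dotProduct_add]
    ring
  have hR : v ⬝ᵥ ((Nᵀ * M * N) *ᵥ v) =
      (C *ᵥ xv + D *ᵥ w) ⬝ᵥ (M *ᵥ (C *ᵥ xv + D *ᵥ w)) := by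
    have hN : N *ᵥ v = C *ᵥ xv + D *ᵥ w := by
      rw [hv, hNdef, Matrix.fromCols_mulVec_sumElim]
    rw [← Matrix.mulVec_mulVec, ← Matrix.mulVec_mulVec, Matrix.dotProduct_mulVec,
      Matrix.vecMul_transpose, hN]
  rw [Matrix.add_mulVec, dotProduct_add, Matrix.smul_mulVec, dotProduct_smul,
    hQ, hR, smul_eq_mul] at hle
  linarith
lemma contOn_coord {ι : Type*} (f : ℝ → ι → ℝ) (s : Set ℝ) (hf : ContinuousOn f s) (i : ι) :
    ContinuousOn (fun t => f t i) s :=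
  (continuous_apply i).comp_continuousOn hf

lemma contOn_dot {ι : Type*} [Fintype ι] (f g : ℝ → ι → ℝ) (s : Set ℝ)
    (hf : ContinuousOn f s) (hg : ContinuousOn g s) :
    ContinuousOn (fun t => f t ⬝ᵥ g t) s := by
  simp only [dotProduct]
  exact continuousOn_finset_sum _ fun i _ => (contOn_coord f s hf i).mul (contOn_coord g s hg i)

lemma contOn_mulVec {ι κ : Type*} [Fintype ι] (A : Matrix κ ι ℝ) (f : ℝ → ι → ℝ) (s : Set ℝ)
    (hf : ContinuousOn f s) : ContinuousOn (fun t => A *ᵥ f t) s := by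
  apply continuousOn_pi.2
  intro i
  simp only [Matrix.mulVec, dotProduct]
  exact continuousOn_finset_sum _ fun j _ => continuousOn_const.mul (contOn_coord f s hf j)

lemma contOn_dvPair {n : ℕ} (du dy : ℝ → EuclideanSpace ℝ (Fin n)) (s : Set ℝ)
    (hdu : ContinuousOn du s) (hdy : ContinuousOn dy s) :
    ContinuousOn (dvPair du dy) s := by
  apply continuousOn_pi.2
  intro i
  cases i with
  | inl j =>
    exact ((continuous_apply j).comp (PiLp.continuous_ofLp (p := 2) (β := fun _ => ℝ))).comp_continuousOn hdu
  | inr j =>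
    exact ((continuous_apply j).comp (PiLp.continuous_ofLp (p := 2) (β := fun _ => ℝ))).comp_continuousOn hdy
lemma inner_toLp_trunc {n : ℕ} (f g : ℝ → EuclideanSpace ℝ (Fin n)) (T : ℝ) (hT : 0 ≤ T)
    (hf : MemLp (trunc f T) 2 posMeasure) (hg : MemLp (trunc g T) 2 posMeasure) :
    ⟪hf.toLp _, hg.toLp _⟫ = ∫ t in (0:ℝ)..T, ⟪f t, g t⟫ := by
  rw [MeasureTheory.L2.inner_def]
  have h1 : ∫ a, ⟪(hf.toLp _) a, (hg.toLp _) a⟫ ∂posMeasure =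
      ∫ a, ⟪trunc f T a, trunc g T a⟫ ∂posMeasure := by
    apply MeasureTheory.integral_congr_ae
    filter_upwards [hf.coeFn_toLp, hg.coeFn_toLp] with a ha hb
    rw [ha, hb]
  rw [h1]
  have h2 : ∀ a, ⟪trunc f T a, trunc g T a⟫ =
      Set.indicator (Set.Iic T) (fun a => ⟪f a, g a⟫) a := by
    intro a
    by_cases h : a ≤ T <;> simp [trunc, Set.indicator, h]
  simp only [h2]
  rw [MeasureTheory.integral_indicator measurableSet_Iic]
  rw [posMeasure, Measure.restrict_restrict measurableSet_Iic]
  rw [Set.inter_comm, Set.Ici_inter_Iic]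
  rw [MeasureTheory.integral_Icc_eq_integral_Ioc, ← intervalIntegral.integral_of_le hT]

lemma part1_main {n m k : ℕ}
    (A : Matrix (Fin k) (Fin k) ℝ) (B : Matrix (Fin k) (Fin n ⊕ Fin n) ℝ)
    (C : Matrix (Fin m) (Fin k) ℝ) (D : Matrix (Fin m) (Fin n ⊕ Fin n) ℝ)
    (M : Matrix (Fin m) (Fin m) ℝ)
    (p11 p12 p22 : ℝ)
    (P : Matrix (Fin k) (Fin k) ℝ) (hP : P.PosSemidef) (τ : ℝ) (hτ : 0 < τ)
    (hLMI : (-(Matrix.fromBlocks (Aᵀ * P + P * A) (P * B) (Bᵀ * P)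
          (-(piKronR n p11 p12 p22)) +
        τ • ((Matrix.fromCols C D)ᵀ * M * Matrix.fromCols C D))).PosSemidef)
    (du dy : ℝ → EuclideanSpace ℝ (Fin n))
    (hdu : ContinuousOn du (Set.Ici 0)) (hdy : ContinuousOn dy (Set.Ici 0))
    (x : ℝ → Fin k → ℝ) (hx0 : x 0 = 0)
    (hxd : ∀ t : ℝ, 0 ≤ t → HasDerivAt x (A *ᵥ x t + B *ᵥ dvPair du dy t) t)
    (hgI : ∀ T : ℝ, 0 < T →
      0 ≤ ∫ t in (0:ℝ)..T, (C *ᵥ x t + D *ᵥ dvPair du dy t) ⬝ᵥ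
        (M *ᵥ (C *ᵥ x t + D *ᵥ dvPair du dy t)))
    (T : ℝ) (hT : 0 < T) :
    0 ≤ p11 * (∫ t in (0:ℝ)..T, ‖du t‖ ^ 2) +
        2 * p12 * (∫ t in (0:ℝ)..T, ⟪du t, dy t⟫) +
        p22 * (∫ t in (0:ℝ)..T, ‖dy t‖ ^ 2) := by
  have hPsym : Pᵀ = P := by
    have := hP.1
    rwa [Matrix.IsHermitian, Matrix.conjTranspose_eq_transpose_of_trivial] at this
  have hIcc : Set.uIcc (0:ℝ) T = Set.Icc 0 T := Set.uIcc_of_le hT.le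
  have hIccsub : Set.Icc (0:ℝ) T ⊆ Set.Ici 0 := fun t ht => ht.1
  -- continuity facts on [0, T]
  have hxc : ContinuousOn x (Set.Icc 0 T) := fun t ht =>
    ((hxd t ht.1).continuousAt).continuousWithinAt
  have hdvc : ContinuousOn (dvPair du dy) (Set.Icc 0 T) :=
    (contOn_dvPair du dy _ hdu hdy).mono hIccsub
  have hgc : ContinuousOn (fun t => C *ᵥ x t + D *ᵥ dvPair du dy t) (Set.Icc 0 T) :=
    (contOn_mulVec C x _ hxc).add (contOn_mulVec D (dvPair du dy) _ hdvc)
  have hx'c : ContinuousOn (fun t => A *ᵥ x t + B *ᵥ dvPair du dy t) (Set.Icc 0 T) :=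
    (contOn_mulVec A x _ hxc).add (contOn_mulVec B (dvPair du dy) _ hdvc)
  have hψc : ContinuousOn
      (fun t => 2 * (x t ⬝ᵥ (P *ᵥ (A *ᵥ x t + B *ᵥ dvPair du dy t)))) (Set.Icc 0 T) :=
    continuousOn_const.mul (contOn_dot x _ _ hxc (contOn_mulVec P _ _ hx'c))
  have hGqc : ContinuousOn (fun t => (C *ᵥ x t + D *ᵥ dvPair du dy t) ⬝ᵥ
      (M *ᵥ (C *ᵥ x t + D *ᵥ dvPair du dy t))) (Set.Icc 0 T) :=
    contOn_dot _ _ _ hgc (contOn_mulVec M _ _ hgc)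
  have hFqc : ContinuousOn (fun t => dvPair du dy t ⬝ᵥ
      (piKronR n p11 p12 p22 *ᵥ dvPair du dy t)) (Set.Icc 0 T) :=
    contOn_dot _ _ _ hdvc (contOn_mulVec _ _ _ hdvc)
  -- interval integrability
  have I1 : IntervalIntegrable
      (fun t => 2 * (x t ⬝ᵥ (P *ᵥ (A *ᵥ x t + B *ᵥ dvPair du dy t)))) volume 0 T :=
    (hψc.mono hIcc.subset).intervalIntegrable
  have I2 : IntervalIntegrable (fun t => (C *ᵥ x t + D *ᵥ dvPair du dy t) ⬝ᵥ
      (M *ᵥ (C *ᵥ x t + D *ᵥ dvPair du dy t))) volume 0 T :=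
    (hGqc.mono hIcc.subset).intervalIntegrable
  have I3 : IntervalIntegrable (fun t => dvPair du dy t ⬝ᵥ
      (piKronR n p11 p12 p22 *ᵥ dvPair du dy t)) volume 0 T :=
    (hFqc.mono hIcc.subset).intervalIntegrable
  -- FTC
  have hFTC : (∫ t in (0:ℝ)..T, 2 * (x t ⬝ᵥ (P *ᵥ (A *ᵥ x t + B *ᵥ dvPair du dy t)))) =
      x T ⬝ᵥ (P *ᵥ x T) - x 0 ⬝ᵥ (P *ᵥ x 0) := by
    apply intervalIntegral.integral_eq_sub_of_hasDerivAt
    · intro t ht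
      rw [hIcc] at ht
      exact quad_deriv P hPsym x _ t (hxd t ht.1)
    · exact I1
  -- pointwise LMI inequality
  have hpt : ∀ t, 2 * (x t ⬝ᵥ (P *ᵥ (A *ᵥ x t + B *ᵥ dvPair du dy t))) +
      τ * ((C *ᵥ x t + D *ᵥ dvPair du dy t) ⬝ᵥ (M *ᵥ (C *ᵥ x t + D *ᵥ dvPair du dy t))) ≤
      dvPair du dy t ⬝ᵥ (piKronR n p11 p12 p22 *ᵥ dvPair du dy t) := fun t =>
    lmi_pt A B C D M p11 p12 p22 P hPsym τ hLMI (x t) (dvPair du dy t)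
  -- integrate the inequality
  have hnonneg : 0 ≤ ∫ t in (0:ℝ)..T,
      (dvPair du dy t ⬝ᵥ (piKronR n p11 p12 p22 *ᵥ dvPair du dy t)
        - (2 * (x t ⬝ᵥ (P *ᵥ (A *ᵥ x t + B *ᵥ dvPair du dy t)))
          + τ * ((C *ᵥ x t + D *ᵥ dvPair du dy t) ⬝ᵥ
              (M *ᵥ (C *ᵥ x t + D *ᵥ dvPair du dy t))))) :=
    intervalIntegral.integral_nonneg hT.le (fun t _ => sub_nonneg.2 (hpt t))
  rw [intervalIntegral.integral_sub I3 (I1.add (I2.const_mul τ)),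
    intervalIntegral.integral_add I1 (I2.const_mul τ),
    intervalIntegral.integral_const_mul, intervalIntegral.integral_const_mul] at hnonneg
  rw [intervalIntegral.integral_const_mul] at hFTC
  have hφT : 0 ≤ x T ⬝ᵥ (P *ᵥ x T) := by
    have := hP.dotProduct_mulVec_nonneg (x T)
    simpa using this
  have hφ0 : x 0 ⬝ᵥ (P *ᵥ x 0) = 0 := by rw [hx0]; simp
  have hG := hgI T hT
  have hmain : 0 ≤ ∫ t in (0:ℝ)..T,
      dvPair du dy t ⬝ᵥ (piKronR n p11 p12 p22 *ᵥ dvPair du dy t) := by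
    nlinarith [mul_nonneg hτ.le hG]
  -- rewrite the integrand
  have hint : (fun t => dvPair du dy t ⬝ᵥ (piKronR n p11 p12 p22 *ᵥ dvPair du dy t)) =
      fun t => p11 * ‖du t‖ ^ 2 + 2 * p12 * ⟪du t, dy t⟫ + p22 * ‖dy t‖ ^ 2 :=
    funext (dv_quad p11 p12 p22 du dy)
  rw [hint] at hmain
  have Ju : IntervalIntegrable (fun t => ‖du t‖ ^ 2) volume 0 T :=
    ((((hdu.mono hIccsub).norm).pow 2).mono hIcc.subset).intervalIntegrable
  have Jy : IntervalIntegrable (fun t => ‖dy t‖ ^ 2) volume 0 T :=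
    ((((hdy.mono hIccsub).norm).pow 2).mono hIcc.subset).intervalIntegrable
  have Juy : IntervalIntegrable (fun t => ⟪du t, dy t⟫) volume 0 T :=
    (((hdu.mono hIccsub).inner (hdy.mono hIccsub)).mono hIcc.subset).intervalIntegrable
  rw [intervalIntegral.integral_add ((Ju.const_mul p11).add (Juy.const_mul (2 * p12)))
      (Jy.const_mul p22),
    intervalIntegral.integral_add (Ju.const_mul p11) (Juy.const_mul (2 * p12)),
    intervalIntegral.integral_const_mul, intervalIntegral.integral_const_mul,
    intervalIntegral.integral_const_mul] at hmain
  linarith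

lemma srg_mem {E : Type*} [NormedAddCommGroup E] [InnerProductSpace ℝ E]
    (p11 p12 p22 : ℝ) (f g : E) (hf : f ≠ 0)
    (hkey : 0 ≤ p11 * ‖f‖ ^ 2 + 2 * p12 * ⟪f, g⟫ + p22 * ‖g‖ ^ 2)
    (z : ℂ) (hz : z = srgPlus f g ∨ z = srgMinus f g) :
    z ∈ SRegion p11 p12 p22 := by
  have ha : 0 < ‖f‖ := norm_pos_iff.2 hf
  by_cases hg : g = 0
  · have hz0 : z = 0 := by rcases hz with h | h <;> simp [h, srgPlus, srgMinus, hg]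
    have hk : 0 ≤ p11 * ‖f‖ ^ 2 := by
      simpa [hg] using hkey
    have hp11 : 0 ≤ p11 := by nlinarith [pow_pos ha 2]
    rw [hz0]
    simp only [SRegion, Set.mem_setOf_eq, Complex.zero_re, norm_zero]
    nlinarith
  · have hb : 0 < ‖g‖ := norm_pos_iff.2 hg
    set c : ℝ := ⟪f, g⟫ with hc
    set θ : ℝ := Real.arccos (c / (‖f‖ * ‖g‖)) with hθ
    have habs : |c / (‖f‖ * ‖g‖)| ≤ 1 := by
      rw [abs_div, abs_of_pos (mul_pos ha hb)]
      exact div_le_one_of_le₀ (abs_real_inner_le_norm f g) (mul_pos ha hb).le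
    have hcos : Real.cos θ = c / (‖f‖ * ‖g‖) :=
      Real.cos_arccos (abs_le.1 habs).1 (abs_le.1 habs).2
    set r : ℝ := ‖g‖ / ‖f‖ with hr
    have hrpos : 0 < r := div_pos hb ha
    have hneg : ∀ s : ℝ, -Complex.I * ((s : ℝ) : ℂ) = ((-s : ℝ) : ℂ) * Complex.I := by
      intro s; push_cast; ring
    have hre : z.re = r * Real.cos θ ∧ ‖z‖ = r := by
      rcases hz with h | h
      · constructor
        · rw [h, srgPlus, if_neg hg, mul_comm Complex.I _, Complex.re_ofReal_mul,
            Complex.exp_ofReal_mul_I_re]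
        · rw [h, srgPlus, if_neg hg, mul_comm Complex.I _, norm_mul,
            Complex.norm_real, Complex.norm_exp_ofReal_mul_I, mul_one, Real.norm_eq_abs,
            abs_of_pos (div_pos hb ha)]
      · constructor
        · rw [h, srgMinus, if_neg hg, hneg, Complex.re_ofReal_mul,
            Complex.exp_ofReal_mul_I_re, Real.cos_neg]
        · rw [h, srgMinus, if_neg hg, hneg, norm_mul,
            Complex.norm_real, Complex.norm_exp_ofReal_mul_I, mul_one, Real.norm_eq_abs,
            abs_of_pos (div_pos hb ha)]
    obtain ⟨hre, habsz⟩ := hre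
    show 0 ≤ p11 + 2 * p12 * z.re + p22 * ‖z‖ ^ 2
    rw [hre, habsz, hcos, hr]
    have heq : p11 + 2 * p12 * (‖g‖ / ‖f‖ * (c / (‖f‖ * ‖g‖))) + p22 * (‖g‖ / ‖f‖) ^ 2 =
        (p11 * ‖f‖ ^ 2 + 2 * p12 * c + p22 * ‖g‖ ^ 2) / ‖f‖ ^ 2 := by
      field_simp
    rw [heq]
    exact div_nonneg hkey (pow_pos ha 2).le

/-- Hard SRG overbound via a hard IQC with multipliers `(M, N)`,
`N` realized by `(A, B, C, D)`: if `H` satisfies the hard incremental IQC and the LMI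
`[[AᵀP + PA, PB], [BᵀP, −(Π ⊗ Iₙ)]] + τ·[C D]ᵀM[C D] ⪯ 0` is feasible with `P ⪰ 0`,
`τ > 0`, then the static hard IQC with multiplier `Π ⊗ I` holds on every truncation,
and consequently `SRG_e(H) ⊆ S(Π)`. -/
theorem hard_srg_overbound_via_iqc (n m k : ℕ)
    (H : (ℝ → EuclideanSpace ℝ (Fin n)) → (ℝ → EuclideanSpace ℝ (Fin n)))
    (hH : ∀ u, ContinuousOn u (Set.Ici 0) → ContinuousOn (H u) (Set.Ici 0))
    (A : Matrix (Fin k) (Fin k) ℝ) (B : Matrix (Fin k) (Fin n ⊕ Fin n) ℝ)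
    (C : Matrix (Fin m) (Fin k) ℝ) (D : Matrix (Fin m) (Fin n ⊕ Fin n) ℝ)
    (M : Matrix (Fin m) (Fin m) ℝ) (hM : M.IsSymm)
    (p11 p12 p22 : ℝ)
    (hIQC : ∀ u₁ u₂ : ℝ → EuclideanSpace ℝ (Fin n),
      ContinuousOn u₁ (Set.Ici 0) → ContinuousOn u₂ (Set.Ici 0) →
      ∃ x : ℝ → Fin k → ℝ, x 0 = 0 ∧
        (∀ t : ℝ, 0 ≤ t → HasDerivAt x
          (A *ᵥ x t + B *ᵥ dvPair (fun s => u₁ s - u₂ s) (fun s => H u₁ s - H u₂ s) t) t) ∧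
        (∀ T : ℝ, 0 < T →
          0 ≤ ∫ t in (0:ℝ)..T,
            (C *ᵥ x t + D *ᵥ dvPair (fun s => u₁ s - u₂ s) (fun s => H u₁ s - H u₂ s) t) ⬝ᵥ
              (M *ᵥ (C *ᵥ x t +
                D *ᵥ dvPair (fun s => u₁ s - u₂ s) (fun s => H u₁ s - H u₂ s) t))))
    (P : Matrix (Fin k) (Fin k) ℝ) (hP : P.PosSemidef) (τ : ℝ) (hτ : 0 < τ)
    (hLMI : (-(Matrix.fromBlocks (Aᵀ * P + P * A) (P * B) (Bᵀ * P)
          (-(piKronR n p11 p12 p22)) +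
        τ • ((Matrix.fromCols C D)ᵀ * M * Matrix.fromCols C D))).PosSemidef) :
    (∀ u₁ u₂ : ℝ → EuclideanSpace ℝ (Fin n),
      ContinuousOn u₁ (Set.Ici 0) → ContinuousOn u₂ (Set.Ici 0) →
      ∀ T : ℝ, 0 < T →
        0 ≤ p11 * (∫ t in (0:ℝ)..T, ‖u₁ t - u₂ t‖ ^ 2) +
            2 * p12 * (∫ t in (0:ℝ)..T, ⟪u₁ t - u₂ t, H u₁ t - H u₂ t⟫) +
            p22 * (∫ t in (0:ℝ)..T, ‖H u₁ t - H u₂ t‖ ^ 2)) ∧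
      hardSRGc H ⊆ SRegion p11 p12 p22 := by
  have hduc : ∀ (u₁ u₂ : ℝ → EuclideanSpace ℝ (Fin n)), ContinuousOn u₁ (Set.Ici 0) →
      ContinuousOn u₂ (Set.Ici 0) →
      ContinuousOn (fun t => u₁ t - u₂ t) (Set.Ici 0) := fun u₁ u₂ h1 h2 => h1.sub h2
  have part1 : ∀ u₁ u₂ : ℝ → EuclideanSpace ℝ (Fin n),
      ContinuousOn u₁ (Set.Ici 0) → ContinuousOn u₂ (Set.Ici 0) →
      ∀ T : ℝ, 0 < T →
        0 ≤ p11 * (∫ t in (0:ℝ)..T, ‖u₁ t - u₂ t‖ ^ 2) +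
            2 * p12 * (∫ t in (0:ℝ)..T, ⟪u₁ t - u₂ t, H u₁ t - H u₂ t⟫) +
            p22 * (∫ t in (0:ℝ)..T, ‖H u₁ t - H u₂ t‖ ^ 2) := by
    intro u₁ u₂ hu₁ hu₂ T hT
    obtain ⟨x, hx0, hxd, hgI⟩ := hIQC u₁ u₂ hu₁ hu₂
    exact part1_main A B C D M p11 p12 p22 P hP τ hτ hLMI
      (fun t => u₁ t - u₂ t) (fun t => H u₁ t - H u₂ t)
      (hduc u₁ u₂ hu₁ hu₂) (hduc (H u₁) (H u₂) (hH u₁ hu₁) (hH u₂ hu₂))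
      x hx0 hxd hgI T hT
  refine ⟨part1, ?_⟩
  intro z hz
  obtain ⟨u₁, u₂, hu₁, hu₂, T, hT, h₁, h₂, hne, hzeq⟩ := hz
  have e1 : ‖h₁.toLp _‖ ^ 2 = ∫ t in (0:ℝ)..T, ‖u₁ t - u₂ t‖ ^ 2 := by
    rw [← real_inner_self_eq_norm_sq, inner_toLp_trunc _ _ T hT.le h₁ h₁]
    apply intervalIntegral.integral_congr
    intro t _
    exact real_inner_self_eq_norm_sq _
  have e2 : ⟪h₁.toLp _, h₂.toLp _⟫ = ∫ t in (0:ℝ)..T, ⟪u₁ t - u₂ t, H u₁ t - H u₂ t⟫ :=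
    inner_toLp_trunc _ _ T hT.le h₁ h₂
  have e3 : ‖h₂.toLp _‖ ^ 2 = ∫ t in (0:ℝ)..T, ‖H u₁ t - H u₂ t‖ ^ 2 := by
    rw [← real_inner_self_eq_norm_sq, inner_toLp_trunc _ _ T hT.le h₂ h₂]
    apply intervalIntegral.integral_congr
    intro t _
    exact real_inner_self_eq_norm_sq _
  have hkey := part1 u₁ u₂ hu₁ hu₂ T hT
  rw [← e1, ← e2, ← e3] at hkey
  exact srg_mem p11 p12 p22 _ _ hne hkey z hzeq
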